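/- Let p > 1 be real, let ζ ∈ ℂ with ζ ≠ 0, and let Φ ∈ ℂ with Φ ≠ 0. Then there exists a unique ξ ∈ ℂ with |ξ| < |ζ| such that ((|ζ|²+|ξ|²)/(|ζ|²−|ξ|²))^(p−1) · ζ · conj(ξ) = Φ. -/

import Mathlib

private lemma g_strictMono {p R : ℝ} (hp : 0 < p) (hR : 0 < R) :
    StrictMonoOn (fun r => ((R ^ 2 + r ^ 2) / (R ^ 2 - r ^ 2)) ^ p * r) (Set.Ico 0 R) := by
  intro a ha b hb hab
  obtain ⟨ha0, haR⟩ := ha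
  obtain ⟨hb0, hbR⟩ := hb
  have hda : 0 < R ^ 2 - a ^ 2 := by nlinarith
  have hdb : 0 < R ^ 2 - b ^ 2 := by nlinarith
  have hBa : 0 < (R ^ 2 + a ^ 2) / (R ^ 2 - a ^ 2) := div_pos (by nlinarith) hda
  have hlt : (R ^ 2 + a ^ 2) / (R ^ 2 - a ^ 2) < (R ^ 2 + b ^ 2) / (R ^ 2 - b ^ 2) := by
    rw [div_lt_div_iff₀ hda hdb]
    have hab2 : a ^ 2 < b ^ 2 := by nlinarith
    have hRR : 0 < R ^ 2 := by positivity
    nlinarith [mul_lt_mul_of_pos_left hab2 hRR]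
  have h1 : ((R ^ 2 + a ^ 2) / (R ^ 2 - a ^ 2)) ^ p < ((R ^ 2 + b ^ 2) / (R ^ 2 - b ^ 2)) ^ p :=
    Real.rpow_lt_rpow hBa.le hlt hp
  have h2 : 0 < ((R ^ 2 + a ^ 2) / (R ^ 2 - a ^ 2)) ^ p := Real.rpow_pos_of_pos hBa p
  dsimp only
  nlinarith

private lemma g_contOn {p R : ℝ} (hp : 0 ≤ p) (hR : 0 < R) :
    ContinuousOn (fun r => ((R ^ 2 + r ^ 2) / (R ^ 2 - r ^ 2)) ^ p * r) (Set.Ico 0 R) := by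
  apply ContinuousOn.mul _ continuousOn_id
  apply ContinuousOn.rpow_const
  · apply ContinuousOn.div (by fun_prop) (by fun_prop)
    intro x hx
    have h : 0 < R ^ 2 - x ^ 2 := by nlinarith [hx.1, hx.2]
    exact h.ne'
  · intro x _; exact Or.inr hp

private lemma g_large {p R : ℝ} (hp : 0 < p) (hR : 0 < R) (M : ℝ) :
    ∃ b ∈ Set.Ico 0 R, M < ((R ^ 2 + b ^ 2) / (R ^ 2 - b ^ 2)) ^ p * b := by
  set T : ℝ := max 1 (2 * (M + 1) / R) with hT
  have hT1 : 1 ≤ T := le_max_left _ _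
  have hT0 : 0 < T := lt_of_lt_of_le one_pos hT1
  set X : ℝ := max 2 (T ^ p⁻¹) with hX
  have hX2 : 2 ≤ X := le_max_left _ _
  have hX0 : 0 < X := lt_of_lt_of_le two_pos hX2
  have hTX : T ≤ X ^ p := by
    calc T = (T ^ p⁻¹) ^ p := (Real.rpow_inv_rpow hT0.le hp.ne').symm
    _ ≤ X ^ p := Real.rpow_le_rpow (Real.rpow_nonneg hT0.le _) (le_max_right _ _) hp.le
  set b : ℝ := R * Real.sqrt (1 - 1 / X) with hb
  have h1X : 0 < 1 - 1 / X := by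
    have : 1 / X ≤ 1 / 2 := by
      apply one_div_le_one_div_of_le two_pos hX2
    linarith
  have hs : Real.sqrt (1 - 1 / X) < 1 := by
    have h : (1 : ℝ) - 1 / X < 1 := by
      have : 0 < 1 / X := by positivity
      linarith
    have := Real.sqrt_lt_sqrt h1X.le h
    rwa [Real.sqrt_one] at this
  have hb0 : 0 ≤ b := by positivity
  have hbR : b < R := by
    calc b < R * 1 := by
          apply mul_lt_mul_of_pos_left hs hR
    _ = R := mul_one R
  have hbsq : b ^ 2 = R ^ 2 * (1 - 1 / X) := by
    rw [hb, mul_pow, Real.sq_sqrt h1X.le]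
  have hd : R ^ 2 - b ^ 2 = R ^ 2 / X := by
    rw [hbsq]; field_simp; ring
  have hbhalf : R / 2 ≤ b := by
    have hs2 : (1:ℝ) / 2 ≤ Real.sqrt (1 - 1 / X) := by
      rw [Real.le_sqrt (by norm_num) h1X.le]
      have : 1 / X ≤ 1 / 2 := one_div_le_one_div_of_le two_pos hX2
      nlinarith
    calc R / 2 = R * (1 / 2) := by ring
    _ ≤ R * Real.sqrt (1 - 1 / X) := mul_le_mul_of_nonneg_left hs2 hR.le
  have hbase : X ≤ (R ^ 2 + b ^ 2) / (R ^ 2 - b ^ 2) := by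
    rw [hd, le_div_iff₀ (by positivity)]
    have hXR : X * (R ^ 2 / X) = R ^ 2 := by field_simp
    rw [hXR]
    nlinarith [sq_nonneg b]
  have hpow : T ≤ ((R ^ 2 + b ^ 2) / (R ^ 2 - b ^ 2)) ^ p :=
    hTX.trans (Real.rpow_le_rpow hX0.le hbase hp.le)
  refine ⟨b, ⟨hb0, hbR⟩, ?_⟩
  have hTM : 2 * (M + 1) / R ≤ T := le_max_right _ _
  have h2 : 2 * (M + 1) / R * (R / 2) ≤ ((R ^ 2 + b ^ 2) / (R ^ 2 - b ^ 2)) ^ p * b :=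
    mul_le_mul (hTM.trans hpow) hbhalf (by positivity)
      (Real.rpow_nonneg (hX0.le.trans hbase) _)
  have : 2 * (M + 1) / R * (R / 2) = M + 1 := by field_simp
  linarith

/-- For real `p > 1`, `ζ ≠ 0` and `Φ ≠ 0` complex, there is a unique `ξ ∈ ℂ` with
`|ξ| < |ζ|` such that `((|ζ|² + |ξ|²)/(|ζ|² − |ξ|²))^(p−1) · ζ · conj ξ = Φ`
(the real power is `Real.rpow`). -/
theorem existsUnique_beltrami_operator (p : ℝ) (hp : 1 < p) (ζ Φ : ℂ)
    (hζ : ζ ≠ 0) (hΦ : Φ ≠ 0) :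
    ∃! ξ : ℂ, ‖ξ‖ < ‖ζ‖ ∧
      ((((‖ζ‖ ^ 2 + ‖ξ‖ ^ 2) /
          (‖ζ‖ ^ 2 - ‖ξ‖ ^ 2)) ^ (p - 1) : ℝ) : ℂ) *
        ζ * (starRingEnd ℂ) ξ = Φ := by
  set R : ℝ := ‖ζ‖ with hRdef
  have hR : 0 < R := norm_pos_iff.mpr hζ
  have hm : 0 < ‖Φ‖ := norm_pos_iff.mpr hΦ
  have hp1 : 0 < p - 1 := by linarith
  set g : ℝ → ℝ := fun r => ((R ^ 2 + r ^ 2) / (R ^ 2 - r ^ 2)) ^ (p - 1) * r with hg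
  -- key: any solution ξ satisfies g |ξ| = |Φ| / R
  have key : ∀ ξ : ℂ, ‖ξ‖ < R →
      ((((R ^ 2 + ‖ξ‖ ^ 2) / (R ^ 2 - ‖ξ‖ ^ 2)) ^ (p - 1) : ℝ) : ℂ) *
        ζ * (starRingEnd ℂ) ξ = Φ → g (‖ξ‖) = ‖Φ‖ / R := by
    intro ξ hξR heq
    have habs := congrArg (norm : ℂ → ℝ) heq
    have hKpos : 0 < ((R ^ 2 + ‖ξ‖ ^ 2) / (R ^ 2 - ‖ξ‖ ^ 2)) ^ (p - 1) := by
      apply Real.rpow_pos_of_pos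
      apply div_pos (by positivity)
      nlinarith [norm_nonneg ξ]
    rw [norm_mul, norm_mul, Complex.norm_real, Real.norm_eq_abs, Complex.norm_conj,
      abs_of_pos hKpos] at habs
    rw [hg]
    dsimp only
    rw [eq_div_iff hR.ne']
    rw [← habs, hRdef]
    ring
  -- find r with g r = |Φ| / R
  obtain ⟨b, hbmem, hgb⟩ := g_large hp1 hR (‖Φ‖ / R)
  have hsub : Set.Icc (0:ℝ) b ⊆ Set.Ico 0 R := fun x hx => ⟨hx.1, lt_of_le_of_lt hx.2 hbmem.2⟩
  have hcont : ContinuousOn g (Set.Icc 0 b) := (g_contOn hp1.le hR).mono hsub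
  have hivt := intermediate_value_Ico (hbmem.1) hcont
  have hg0 : g 0 = 0 := by simp [hg]
  have hmem : ‖Φ‖ / R ∈ Set.Ico (g 0) (g b) := by
    constructor
    · rw [hg0]; positivity
    · exact hgb
  obtain ⟨r, hrmem, hgr⟩ := hivt hmem
  have hr0 : 0 ≤ r := hrmem.1
  have hrR : r < R := lt_of_lt_of_le hrmem.2 (le_of_lt hbmem.2)
  set K : ℝ := ((R ^ 2 + r ^ 2) / (R ^ 2 - r ^ 2)) ^ (p - 1) with hK
  have hKpos : 0 < K := by
    apply Real.rpow_pos_of_pos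
    apply div_pos (by positivity)
    nlinarith
  have hKr : K * r = ‖Φ‖ / R := hgr
  have hrpos : 0 < r := by
    rcases hr0.lt_or_eq with h | h
    · exact h
    · exfalso; rw [← h] at hKr; simp at hKr
      have : 0 < ‖Φ‖ / R := by positivity
      linarith [hKr]
  set ξ : ℂ := (starRingEnd ℂ) (Φ / ((K : ℂ) * ζ)) with hξ
  have hKC : (K : ℂ) ≠ 0 := by exact_mod_cast hKpos.ne'
  have hconjξ : (starRingEnd ℂ) ξ = Φ / ((K : ℂ) * ζ) := by
    rw [hξ, Complex.conj_conj]
  have hKr' : K * r * R = ‖Φ‖ := by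
    rw [hKr, div_mul_cancel₀ _ hR.ne']
  have habsξ : ‖ξ‖ = r := by
    rw [hξ, Complex.norm_conj, norm_div, norm_mul, Complex.norm_real, Real.norm_eq_abs, abs_of_pos hKpos,
      ← hRdef, div_eq_iff (by positivity : (K * R) ≠ 0)]
    rw [← hKr']; ring
  have hξR : ‖ξ‖ < R := by rw [habsξ]; exact hrR
  refine ⟨ξ, ⟨hξR, ?_⟩, ?_⟩
  · rw [habsξ, hconjξ, ← hK]
    field_simp
  · rintro ξ' ⟨hξ'R, heq'⟩
    have hgξ' := key ξ' hξ'R heq'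
    have hrval : ‖ξ'‖ = r := by
      have hinj := (g_strictMono hp1 hR).injOn
      have h1 : ‖ξ'‖ ∈ Set.Ico (0:ℝ) R := ⟨norm_nonneg _, hξ'R⟩
      have h2 : r ∈ Set.Ico (0:ℝ) R := ⟨hr0, hrR⟩
      exact hinj h1 h2 (hgξ'.trans hgr.symm)
    have hK' : (((R ^ 2 + ‖ξ'‖ ^ 2) / (R ^ 2 - ‖ξ'‖ ^ 2)) ^ (p - 1) : ℝ) = K := by
      rw [hrval, hK]
    rw [hK'] at heq'
    -- heq' : (K:ℂ) * ζ * conj ξ' = Φ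
    have hconj' : (starRingEnd ℂ) ξ' = Φ / ((K : ℂ) * ζ) := by
      rw [← heq']; field_simp
    have : (starRingEnd ℂ) ξ' = (starRingEnd ℂ) ξ := by rw [hconj', hconjξ]
    exact star_injective this
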